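/- arXiv:math/0207032 — 3 statements merged into one kernel-verified Lean document; each statement's English description precedes it below -/
import Mathlib

section
/- Let n ≥ 2 be an integer and r > 0 a real number, and for ν ∈ ℕ (including ν = 0) set λ̄_ν := ν(ν + n − 2)/r². Let (λ_j)_{j∈ℕ} be a nondecreasing sequence of real numbers such that {λ_j : j ∈ ℕ} = {λ̄_ν : ν ∈ ℕ} and such that each value λ̄_ν is attained by λ_j for only finitely many indices j. Then limsup_{j→∞} (λ_{j+1} − λ_j)/(λ_j)^{1/2} = 2/r. -/
open Filter

/-- Let `n ≥ 2`, `r > 0`, and `λ̄_ν := ν(ν + n − 2)/r²` for `ν ∈ ℕ`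
(including `ν = 0`).  If `(λ_j)` is a nondecreasing real sequence whose set of values is
exactly `{λ̄_ν : ν ∈ ℕ}` and which attains each value `λ̄_ν` only finitely many times, then
`limsup_{j→∞} (λ_{j+1} − λ_j)/(λ_j)^{1/2} = 2/r`. -/
theorem statement10 (n : ℕ) (hn : 2 ≤ n) (r : ℝ) (hr : 0 < r)
    (lamb : ℕ → ℝ) (hlamb : ∀ ν : ℕ, lamb ν = (ν : ℝ) * ((ν : ℝ) + (n : ℝ) - 2) / r ^ 2)
    (lam : ℕ → ℝ) (hmono : Monotone lam)
    (hrange : Set.range lam = Set.range lamb)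
    (hfin : ∀ ν : ℕ, {j : ℕ | lam j = lamb ν}.Finite) :
    limsup (fun j : ℕ => (lam (j + 1) - lam j) / Real.sqrt (lam j)) atTop = 2 / r := by
  have hr2 : (0:ℝ) < r ^ 2 := by positivity
  have hn2 : (2:ℝ) ≤ (n:ℝ) := by exact_mod_cast hn
  have hrne : r ≠ 0 := ne_of_gt hr
  -- lamb is strictly monotone
  have hsm : StrictMono lamb := by
    apply strictMono_nat_of_lt_succ
    intro m
    rw [hlamb, hlamb]
    rw [div_lt_div_iff₀ hr2 hr2]
    have h1 : (0:ℝ) ≤ (m:ℝ) := Nat.cast_nonneg m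
    push_cast
    nlinarith
  -- the gap function
  set f : ℕ → ℝ := fun m => (lamb (m + 1) - lamb m) / Real.sqrt (lamb m) with hf
  have hf_nonneg : ∀ m, 0 ≤ f m := fun m =>
    div_nonneg (sub_nonneg.mpr (hsm.monotone (Nat.le_succ m))) (Real.sqrt_nonneg _)
  -- the difference of consecutive lamb values
  have hd : ∀ m : ℕ, lamb (m + 1) - lamb m = (2 * (m:ℝ) + n - 1) / r ^ 2 := by
    intro m
    rw [hlamb, hlamb]
    push_cast
    field_simp
    ring
  -- lower bound on f for m ≥ 1
  have hlow : ∀ m : ℕ, 1 ≤ m → 2 / r ≤ f m := by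
    intro m hm
    have hm1 : (1:ℝ) ≤ (m:ℝ) := by exact_mod_cast hm
    have hlpos : 0 < lamb m := by
      rw [hlamb]; apply div_pos _ hr2; nlinarith
    have hspos : 0 < Real.sqrt (lamb m) := Real.sqrt_pos.mpr hlpos
    have hs_le : Real.sqrt (lamb m) ≤ (2 * (m:ℝ) + n - 2) / (2 * r) := by
      have hXnn : (0:ℝ) ≤ (2 * (m:ℝ) + n - 2) / (2 * r) := by
        apply div_nonneg _ (by linarith)
        nlinarith
      calc Real.sqrt (lamb m) ≤ Real.sqrt (((2 * (m:ℝ) + n - 2) / (2 * r)) ^ 2) := by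
            apply Real.sqrt_le_sqrt
            rw [hlamb, div_pow, div_le_div_iff₀ hr2 (by positivity)]
            nlinarith [sq_nonneg (((n:ℝ) - 2) * r)]
        _ = (2 * (m:ℝ) + n - 2) / (2 * r) := Real.sqrt_sq hXnn
    show 2 / r ≤ (lamb (m + 1) - lamb m) / Real.sqrt (lamb m)
    rw [div_le_div_iff₀ hr hspos, hd]
    have : (2 * (m:ℝ) + n - 1) / r ^ 2 * r = (2 * (m:ℝ) + n - 1) / r := by
      field_simp
    rw [this, le_div_iff₀ hr]
    have h2 : Real.sqrt (lamb m) * (2 * r) ≤ 2 * (m:ℝ) + n - 2 :=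
      (le_div_iff₀ (by positivity)).mp hs_le
    nlinarith
  -- upper bound on f for m ≥ 1
  have hupp : ∀ m : ℕ, 1 ≤ m → f m ≤ 2 / r + ((n:ℝ) - 1) / r * (1 / (m:ℝ)) := by
    intro m hm
    have hm1 : (1:ℝ) ≤ (m:ℝ) := by exact_mod_cast hm
    have hmpos : (0:ℝ) < (m:ℝ) := by linarith
    have hs_ge : (m:ℝ) / r ≤ Real.sqrt (lamb m) := by
      calc (m:ℝ) / r = Real.sqrt (((m:ℝ) / r) ^ 2) := (Real.sqrt_sq (by positivity)).symm
        _ ≤ Real.sqrt (lamb m) := by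
            apply Real.sqrt_le_sqrt
            rw [hlamb, div_pow, div_le_div_iff₀ (by positivity) hr2]
            nlinarith [mul_nonneg (mul_nonneg hmpos.le (show (0:ℝ) ≤ (n:ℝ) - 2 by linarith)) hr2.le]
    have hmr : (0:ℝ) < (m:ℝ) / r := by positivity
    show (lamb (m + 1) - lamb m) / Real.sqrt (lamb m) ≤ _
    calc (lamb (m + 1) - lamb m) / Real.sqrt (lamb m)
        ≤ (lamb (m + 1) - lamb m) / ((m:ℝ) / r) := by
          apply div_le_div_of_nonneg_left (sub_nonneg.mpr (hsm.monotone (Nat.le_succ m))) hmr hs_ge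
      _ = 2 / r + ((n:ℝ) - 1) / r * (1 / (m:ℝ)) := by
          rw [hd]
          field_simp
          ring
  -- f tends to 2/r
  have hC : Tendsto f atTop (nhds (2 / r)) := by
    have h1 : Tendsto (fun m : ℕ => 2 / r + ((n:ℝ) - 1) / r * (1 / (m:ℝ))) atTop
        (nhds (2 / r)) := by
      have := (tendsto_one_div_atTop_nhds_zero_nat.const_mul (((n:ℝ) - 1) / r)).const_add (2 / r)
      simpa using this
    apply tendsto_of_tendsto_of_tendsto_of_le_of_le' tendsto_const_nhds h1
    · filter_upwards [eventually_ge_atTop 1] with m hm using hlow m hm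
    · filter_upwards [eventually_ge_atTop 1] with m hm using hupp m hm
  -- the index function
  have hmem : ∀ j : ℕ, lam j ∈ Set.range lamb := fun j => hrange ▸ Set.mem_range_self j
  choose idx hidx using hmem
  -- hidx j : lamb (idx j) = lam j
  have hmono_idx : Monotone idx := by
    intro i j hij
    rw [← hsm.le_iff_le, hidx, hidx]
    exact hmono hij
  have hsurj : ∀ m : ℕ, ∃ j, lam j = lamb m := by
    intro m
    have : lamb m ∈ Set.range lam := hrange ▸ Set.mem_range_self m
    exact this
  have hsucc : ∀ j : ℕ, idx (j + 1) ≤ idx j + 1 := by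
    intro j
    by_contra h
    push_neg at h
    obtain ⟨k, hk⟩ := hsurj (idx j + 1)
    have h1 : lam j < lam k := by
      rw [← hidx j, hk]; exact hsm (Nat.lt_succ_self _)
    have h2 : lam k < lam (j + 1) := by
      rw [← hidx (j + 1), hk]; exact hsm h
    have hjk : j < k := by
      by_contra hc; push_neg at hc; exact absurd (hmono hc) (not_le.mpr h1)
    have hkj : k < j + 1 := by
      by_contra hc; push_neg at hc; exact absurd (hmono hc) (not_le.mpr h2)
    omega
  have hidx_eq : ∀ j m, idx j = m ↔ lam j = lamb m := by
    intro j m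
    constructor
    · intro h; rw [← hidx j, h]
    · intro h; apply hsm.injective; rw [hidx j, h]
  -- at the top of each level there is a transition
  have hlevel : ∀ m : ℕ, ∃ j, idx j = m ∧ idx (j + 1) = m + 1 := by
    intro m
    have hS : {j : ℕ | lam j = lamb m}.Finite := hfin m
    obtain ⟨j₀, hj₀⟩ := hsurj m
    have hne : hS.toFinset.Nonempty := ⟨j₀, hS.mem_toFinset.mpr hj₀⟩
    set j := hS.toFinset.max' hne with hj
    have hjmem : lam j = lamb m := hS.mem_toFinset.mp (hS.toFinset.max'_mem hne)
    have hjm : idx j = m := (hidx_eq j m).mpr hjmem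
    refine ⟨j, hjm, ?_⟩
    have h1 : m ≤ idx (j + 1) := hjm ▸ hmono_idx (Nat.le_succ j)
    have h2 : idx (j + 1) ≤ m + 1 := hjm ▸ hsucc j
    have h3 : idx (j + 1) ≠ m := by
      intro hc
      have : j + 1 ∈ hS.toFinset := hS.mem_toFinset.mpr ((hidx_eq _ m).mp hc)
      have := hS.toFinset.le_max' _ this
      omega
    omega
  have hidx_top : Tendsto idx atTop atTop := by
    apply tendsto_atTop_atTop_of_monotone hmono_idx
    intro b
    obtain ⟨j, hj, _⟩ := hlevel b
    exact ⟨j, hj.ge⟩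
  -- the sequence in question
  set term : ℕ → ℝ := fun j => (lam (j + 1) - lam j) / Real.sqrt (lam j) with hterm
  have hterm_nonneg : ∀ j, 0 ≤ term j := fun j =>
    div_nonneg (sub_nonneg.mpr (hmono (Nat.le_succ j))) (Real.sqrt_nonneg _)
  have htrans : ∀ j, idx (j + 1) = idx j + 1 → term j = f (idx j) := by
    intro j hj
    show (lam (j + 1) - lam j) / Real.sqrt (lam j) = _
    rw [← hidx j, ← hidx (j + 1), hj]
  have hterm_le : ∀ j, term j ≤ f (idx j) := by
    intro j
    rcases eq_or_ne (idx (j + 1)) (idx j) with h | h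
    · have : lam (j + 1) = lam j := by rw [← hidx (j + 1), h, hidx j]
      have : term j = 0 := by
        show (lam (j + 1) - lam j) / Real.sqrt (lam j) = 0
        rw [this, sub_self, zero_div]
      rw [this]; exact hf_nonneg _
    · have h1 : idx j ≤ idx (j + 1) := hmono_idx (Nat.le_succ j)
      have h2 : idx (j + 1) ≤ idx j + 1 := hsucc j
      have : idx (j + 1) = idx j + 1 := by omega
      exact (htrans j this).le
  have hcomp : Tendsto (f ∘ idx) atTop (nhds (2 / r)) := hC.comp hidx_top
  have hbdd : IsBoundedUnder (· ≤ ·) atTop term :=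
    hcomp.isBoundedUnder_le.mono_le (Eventually.of_forall hterm_le)
  have hfreq : ∃ᶠ j in atTop, 2 / r ≤ term j := by
    rw [frequently_atTop]
    intro J
    obtain ⟨j, hj1, hj2⟩ := hlevel (idx J + 1)
    have hJj : J ≤ j := by
      by_contra hc
      push_neg at hc
      have := hmono_idx hc.le
      omega
    refine ⟨j, hJj, ?_⟩
    rw [htrans j (by omega), hj1]
    exact hlow _ (Nat.le_add_left 1 _)
  apply le_antisymm
  · calc limsup term atTop ≤ limsup (f ∘ idx) atTop := by
          refine limsup_le_limsup (Eventually.of_forall hterm_le) ?_ ?_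
          · exact isCoboundedUnder_le_of_le atTop hterm_nonneg
          · exact hcomp.isBoundedUnder_le
      _ = 2 / r := hcomp.limsup_eq
  · exact le_limsup_of_frequently_le hfreq hbdd
end

section
/- Let n ≥ 2 be an integer and r > 0 a real number; for ν ∈ ℕ set λ̄_ν := ν(ν + n − 2)/r², ξ_ν := 1/(8r²) + (1/(64r⁴) + λ̄_ν/(4r²))^{1/2} and η_ν := −1/(8r²) + (1/(64r⁴) + λ̄_ν/(4r²))^{1/2}. Then there exists ν₀ ∈ ℕ such that for all ν ≥ ν₀, (λ̄_{ν+1} − η_{ν+1}) − (λ̄_ν + ξ_ν) ≥ (1/3)(λ̄_{ν+1} − λ̄_ν); in particular the open interval I_ν := (λ̄_ν + ξ_ν, λ̄_{ν+1} − η_{ν+1}) is nonempty for all ν ≥ ν₀. -/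
open Filter

/-- For `n ≥ 2`, `r > 0`, `λ̄_ν := ν(ν + n − 2)/r²`,
`ξ_ν := 1/(8r²) + (1/(64r⁴) + λ̄_ν/(4r²))^{1/2}` and
`η_ν := −1/(8r²) + (1/(64r⁴) + λ̄_ν/(4r²))^{1/2}`, there exists `ν₀ ∈ ℕ` such that for all
`ν ≥ ν₀`, `(λ̄_{ν+1} − η_{ν+1}) − (λ̄_ν + ξ_ν) ≥ (1/3)(λ̄_{ν+1} − λ̄_ν)`; in particular the
open interval `I_ν := (λ̄_ν + ξ_ν, λ̄_{ν+1} − η_{ν+1})` is nonempty for all `ν ≥ ν₀`. -/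
theorem statement12 (n : ℕ) (hn : 2 ≤ n) (r : ℝ) (hr : 0 < r)
    (lamb : ℕ → ℝ) (hlamb : ∀ ν : ℕ, lamb ν = (ν : ℝ) * ((ν : ℝ) + (n : ℝ) - 2) / r ^ 2)
    (ξ : ℕ → ℝ)
    (hξ : ∀ ν : ℕ, ξ ν = 1 / (8 * r ^ 2) + Real.sqrt (1 / (64 * r ^ 4) + lamb ν / (4 * r ^ 2)))
    (η : ℕ → ℝ)
    (hη : ∀ ν : ℕ, η ν = -(1 / (8 * r ^ 2)) + Real.sqrt (1 / (64 * r ^ 4) + lamb ν / (4 * r ^ 2))) :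
    ∃ ν₀ : ℕ, ∀ ν : ℕ, ν₀ ≤ ν →
      (1 / 3) * (lamb (ν + 1) - lamb ν) ≤ (lamb (ν + 1) - η (ν + 1)) - (lamb ν + ξ ν) ∧
        (Set.Ioo (lamb ν + ξ ν) (lamb (ν + 1) - η (ν + 1))).Nonempty := by
  have hr2 : (0:ℝ) < r ^ 2 := by positivity
  have hr4 : (0:ℝ) < r ^ 4 := by positivity
  have hn2 : (2:ℝ) ≤ (n:ℝ) := by exact_mod_cast hn
  -- key bound on the square roots
  have hkey : ∀ m : ℕ,
      Real.sqrt (1 / (64 * r ^ 4) + lamb m / (4 * r ^ 2)) ≤ ((m:ℝ) + n + 1) / (2 * r ^ 2) := by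
    intro m
    have hm0 : (0:ℝ) ≤ (m:ℝ) := Nat.cast_nonneg m
    have e1 : 1 / (64 * r ^ 4) + lamb m / (4 * r ^ 2)
        = (1 / 16 + (m:ℝ) * ((m:ℝ) + n - 2)) / (4 * r ^ 4) := by
      rw [hlamb]; field_simp; ring
    have e2 : (((m:ℝ) + n + 1) / (2 * r ^ 2)) ^ 2 = ((m:ℝ) + n + 1) ^ 2 / (4 * r ^ 4) := by
      rw [div_pow]; ring_nf
    have hle : 1 / (64 * r ^ 4) + lamb m / (4 * r ^ 2)
        ≤ (((m:ℝ) + n + 1) / (2 * r ^ 2)) ^ 2 := by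
      rw [e1, e2]
      gcongr ?_ / _
      nlinarith [mul_nonneg hm0 (by linarith : (0:ℝ) ≤ (n:ℝ))]
    calc Real.sqrt (1 / (64 * r ^ 4) + lamb m / (4 * r ^ 2))
        ≤ Real.sqrt ((((m:ℝ) + n + 1) / (2 * r ^ 2)) ^ 2) := Real.sqrt_le_sqrt hle
      _ = ((m:ℝ) + n + 1) / (2 * r ^ 2) := Real.sqrt_sq (by positivity)
  refine ⟨n + 7, fun ν hν => ?_⟩
  have ha : (n:ℝ) + 7 ≤ (ν:ℝ) := by exact_mod_cast hν
  set a : ℝ := (ν:ℝ) with ha_def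
  have ha0 : (0:ℝ) ≤ a := Nat.cast_nonneg ν
  have hD : lamb (ν + 1) - lamb ν = (2 * a + n - 1) / r ^ 2 := by
    rw [hlamb, hlamb]; push_cast; field_simp; ring
  have hb1 := hkey ν
  have hb2 := hkey (ν + 1)
  have hb2' : Real.sqrt (1 / (64 * r ^ 4) + lamb (ν + 1) / (4 * r ^ 2))
      ≤ (a + 1 + n + 1) / (2 * r ^ 2) := by
    refine hb2.trans_eq ?_
    push_cast
    ring
  set s1 := Real.sqrt (1 / (64 * r ^ 4) + lamb ν / (4 * r ^ 2)) with hs1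
  set s2 := Real.sqrt (1 / (64 * r ^ 4) + lamb (ν + 1) / (4 * r ^ 2)) with hs2
  have key : s1 + s2 ≤ (2 / 3) * ((2 * a + n - 1) / r ^ 2) := by
    have h3 : (a + n + 1) / (2 * r ^ 2) + (a + 1 + n + 1) / (2 * r ^ 2)
        ≤ (2 / 3) * ((2 * a + n - 1) / r ^ 2) := by
      rw [← add_div,
        show (2:ℝ) / 3 * ((2 * a + ↑n - 1) / r ^ 2) = (2 * (2 * a + ↑n - 1)) / (3 * r ^ 2) by
          ring,
        div_le_div_iff₀ (by positivity) (by positivity)]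
      nlinarith [mul_nonneg (by linarith : (0:ℝ) ≤ a - n - 7) hr2.le]
    linarith
  have hpos : (0:ℝ) < (2 * a + n - 1) / r ^ 2 :=
    div_pos (by linarith) hr2
  have hmain : (1 / 3) * (lamb (ν + 1) - lamb ν)
      ≤ (lamb (ν + 1) - η (ν + 1)) - (lamb ν + ξ ν) := by
    rw [hξ ν, hη (ν + 1)]
    rw [← hs1, ← hs2]
    linarith [key, hD]
  refine ⟨hmain, Set.nonempty_Ioo.mpr ?_⟩
  have : (0:ℝ) < (1 / 3) * (lamb (ν + 1) - lamb ν) := by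
    rw [hD] at *
    linarith
  linarith
end

section
/- Let n ≥ 2 be an integer and r > 0 a real number; for ν ∈ ℕ set λ̄_ν := ν(ν + n − 2)/r², ξ_ν := 1/(8r²) + (1/(64r⁴) + λ̄_ν/(4r²))^{1/2} and η_ν := −1/(8r²) + (1/(64r⁴) + λ̄_ν/(4r²))^{1/2}. Let (μ_j)_{j∈ℕ} be a nondecreasing sequence of real numbers with μ_j → ∞ as j → ∞. Assume there is ν₀ ∈ ℕ such that: (i) for every ν ≥ ν₀, no term μ_j lies in the open interval I_ν := (λ̄_ν + ξ_ν, λ̄_{ν+1} − η_{ν+1}); and (ii) the set of ν ≥ ν₀ for which some term μ_j lies in the closed interval [λ̄_ν − η_ν, λ̄_ν + ξ_ν] is infinite. Then limsup_{j→∞} (μ_{j+1} − μ_j)/(μ_j)^{1/2} ≥ 2/(3r); in particular limsup_{j→∞} (μ_{j+1} − μ_j)/(μ_j)^{1/2} > 0. -/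
open Filter

set_option maxHeartbeats 1000000 in
/-- Let `n ≥ 2`, `r > 0`, `λ̄_ν := ν(ν + n − 2)/r²`,
`ξ_ν := 1/(8r²) + (1/(64r⁴) + λ̄_ν/(4r²))^{1/2}`,
`η_ν := −1/(8r²) + (1/(64r⁴) + λ̄_ν/(4r²))^{1/2}`.  Let `(μ_j)` be a nondecreasing real
sequence with `μ_j → ∞`.  Assume there is `ν₀` such that (i) for every `ν ≥ ν₀` no term `μ_j`
lies in the open interval `I_ν = (λ̄_ν + ξ_ν, λ̄_{ν+1} − η_{ν+1})`, and (ii) infinitely many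
`ν ≥ ν₀` are such that some `μ_j` lies in `[λ̄_ν − η_ν, λ̄_ν + ξ_ν]`.  Then
`limsup_{j→∞} (μ_{j+1} − μ_j)/(μ_j)^{1/2} ≥ 2/(3r) > 0` (the limsup taken in the extended
reals). -/
theorem statement13 (n : ℕ) (hn : 2 ≤ n) (r : ℝ) (hr : 0 < r)
    (lamb : ℕ → ℝ) (hlamb : ∀ ν : ℕ, lamb ν = (ν : ℝ) * ((ν : ℝ) + (n : ℝ) - 2) / r ^ 2)
    (ξ : ℕ → ℝ)
    (hξ : ∀ ν : ℕ, ξ ν = 1 / (8 * r ^ 2) + Real.sqrt (1 / (64 * r ^ 4) + lamb ν / (4 * r ^ 2)))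
    (η : ℕ → ℝ)
    (hη : ∀ ν : ℕ, η ν = -(1 / (8 * r ^ 2)) + Real.sqrt (1 / (64 * r ^ 4) + lamb ν / (4 * r ^ 2)))
    (μ : ℕ → ℝ) (hmono : Monotone μ) (htend : Tendsto μ atTop atTop)
    (ν₀ : ℕ)
    (hres : ∀ ν : ℕ, ν₀ ≤ ν → ∀ j : ℕ,
      μ j ∉ Set.Ioo (lamb ν + ξ ν) (lamb (ν + 1) - η (ν + 1)))
    (hinf : {ν : ℕ | ν₀ ≤ ν ∧ ∃ j : ℕ,
      μ j ∈ Set.Icc (lamb ν - η ν) (lamb ν + ξ ν)}.Infinite) :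
    ((2 / (3 * r) : ℝ) : EReal) ≤
        limsup (fun j : ℕ => (((μ (j + 1) - μ j) / Real.sqrt (μ j) : ℝ) : EReal)) atTop ∧
      (0 : EReal) <
        limsup (fun j : ℕ => (((μ (j + 1) - μ j) / Real.sqrt (μ j) : ℝ) : EReal)) atTop := by
  classical
  have hr2 : (0:ℝ) < r ^ 2 := by positivity
  have hN2 : (2:ℝ) ≤ (n:ℝ) := by exact_mod_cast hn
  have key : ∀ M : ℕ, ∃ j, M ≤ j ∧
      (2/(3*r) : ℝ) ≤ (μ (j+1) - μ j) / Real.sqrt (μ j) := by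
    intro M
    obtain ⟨ν, ⟨hν0, j₀, hj₀l, hj₀u⟩, hνK⟩ :=
      hinf.exists_gt (max n (Nat.ceil (2*r^2*μ M)))
    set v : ℝ := (ν : ℝ) with hv
    have hvN : (n:ℝ) ≤ v := by
      rw [hv]
      exact_mod_cast le_of_lt (lt_of_le_of_lt (le_max_left _ _) hνK)
    have hv2 : (2:ℝ) ≤ v := le_trans hN2 hvN
    have hv1 : (1:ℝ) ≤ v := by linarith
    have hvμ : 2*r^2*μ M < v := by
      have h1 : (Nat.ceil (2*r^2*μ M) : ℝ) < v := by
        rw [hv]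
        exact_mod_cast lt_of_le_of_lt (le_max_right _ _) hνK
      exact lt_of_le_of_lt (Nat.le_ceil _) h1
    have hrne : r ≠ 0 := ne_of_gt hr
    -- square-root upper bounds
    have sqrt_le : ∀ a x : ℝ, 0 ≤ x → a ≤ x^2 → Real.sqrt a ≤ x := by
      intro a x hx h
      calc Real.sqrt a ≤ Real.sqrt (x^2) := Real.sqrt_le_sqrt h
        _ = x := by rw [Real.sqrt_sq hx]
    have hlν : lamb ν = v * (v + (n:ℝ) - 2) / r^2 := hlamb ν
    have hlν1 : lamb (ν+1) = (v+1) * (v + (n:ℝ) - 1) / r^2 := by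
      rw [hlamb (ν+1)]; push_cast; rw [hv]; ring
    have hs0 : Real.sqrt (1 / (64 * r ^ 4) + lamb ν / (4 * r ^ 2)) ≤
        1/(8*r^2) + (v + ((n:ℝ)-2)/2)/(2*r^2) := by
      apply sqrt_le
      · have h0 : (0:ℝ) ≤ v + ((n:ℝ)-2)/2 := by linarith
        positivity
      · have hdiff : (1/(8*r^2) + (v + ((n:ℝ)-2)/2)/(2*r^2))^2 -
            (1 / (64 * r ^ 4) + (v * (v + (n:ℝ) - 2) / r^2) / (4 * r ^ 2)) =
            (v + ((n:ℝ)-2)/2)/(8*r^4) + ((n:ℝ)-2)^2/(16*r^4) := by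
          field_simp
          ring
        have h1 : (0:ℝ) ≤ (v + ((n:ℝ)-2)/2)/(8*r^4) := by
          apply div_nonneg (by linarith) (by positivity)
        have h2 : (0:ℝ) ≤ ((n:ℝ)-2)^2/(16*r^4) := by positivity
        rw [hlν]
        linarith
    have hs1 : Real.sqrt (1 / (64 * r ^ 4) + lamb (ν+1) / (4 * r ^ 2)) ≤
        1/(8*r^2) + (v + (n:ℝ)/2)/(2*r^2) := by
      apply sqrt_le
      · have h0 : (0:ℝ) ≤ v + (n:ℝ)/2 := by linarith
        positivity
      · have hdiff : (1/(8*r^2) + (v + (n:ℝ)/2)/(2*r^2))^2 -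
            (1 / (64 * r ^ 4) + ((v+1) * (v + (n:ℝ) - 1) / r^2) / (4 * r ^ 2)) =
            (v + (n:ℝ)/2)/(8*r^4) + ((n:ℝ)/2-1)^2/(4*r^4) := by
          field_simp
          ring
        have h1 : (0:ℝ) ≤ (v + (n:ℝ)/2)/(8*r^4) := by
          apply div_nonneg (by linarith) (by positivity)
        have h2 : (0:ℝ) ≤ ((n:ℝ)/2-1)^2/(4*r^4) := by positivity
        rw [hlν1]
        linarith
    have hξν : ξ ν ≤ 1/(4*r^2) + (v + ((n:ℝ)-2)/2)/(2*r^2) := by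
      have hc : 1/(4*r^2) = 1/(8*r^2) + 1/(8*r^2) := by ring
      rw [hξ ν, hc]; linarith
    have hην : η ν ≤ (v + ((n:ℝ)-2)/2)/(2*r^2) := by
      rw [hη ν]; linarith
    have hην1 : η (ν+1) ≤ (v + (n:ℝ)/2)/(2*r^2) := by
      rw [hη (ν+1)]; linarith
    -- bound B = lamb ν + ξ ν
    have hB : lamb ν + ξ ν ≤ 9*v^2/(4*r^2) := by
      have hdiff : 9*v^2/(4*r^2) - (v * (v + (n:ℝ) - 2) / r^2 +
          (1/(4*r^2) + (v + ((n:ℝ)-2)/2)/(2*r^2))) =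
          (5*v^2/4 - ((n:ℝ)-2)*v - v/2 - ((n:ℝ)-1)/4)/r^2 := by
        field_simp
        ring
      have hnum : (0:ℝ) ≤ 5*v^2/4 - ((n:ℝ)-2)*v - v/2 - ((n:ℝ)-1)/4 := by
        nlinarith [mul_nonneg (sub_nonneg.mpr hvN) (by linarith : (0:ℝ) ≤ v)]
      have h2 : (0:ℝ) ≤ (5*v^2/4 - ((n:ℝ)-2)*v - v/2 - ((n:ℝ)-1)/4)/r^2 :=
        div_nonneg hnum (le_of_lt hr2)
      rw [hlν]
      linarith
    -- gap lower bound
    have hGap : v/r^2 ≤ (lamb (ν+1) - η (ν+1)) - (lamb ν + ξ ν) := by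
      have hdiff : ((v+1) * (v + (n:ℝ) - 1) / r^2 - (v + (n:ℝ)/2)/(2*r^2)) -
          (v * (v + (n:ℝ) - 2) / r^2 + (1/(4*r^2) + (v + ((n:ℝ)-2)/2)/(2*r^2))) - v/r^2 =
          (2*(n:ℝ)-3)/(4*r^2) := by
        field_simp
        ring
      have h2 : (0:ℝ) ≤ (2*(n:ℝ)-3)/(4*r^2) := by
        apply div_nonneg (by linarith) (by positivity)
      rw [hlν, hlν1]
      linarith
    -- lower bound on lamb ν - η ν
    have hlow : v^2/(2*r^2) ≤ lamb ν - η ν := by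
      have hdiff : (v * (v + (n:ℝ) - 2) / r^2 - (v + ((n:ℝ)-2)/2)/(2*r^2)) - v^2/(2*r^2) =
          (v^2/2 + ((n:ℝ)-2)*v - v/2 - ((n:ℝ)-2)/4)/r^2 := by
        field_simp
        ring
      have hnum : (0:ℝ) ≤ v^2/2 + ((n:ℝ)-2)*v - v/2 - ((n:ℝ)-2)/4 := by
        nlinarith [mul_nonneg (by linarith : (0:ℝ) ≤ (n:ℝ)-2) (by linarith : (0:ℝ) ≤ v)]
      have h2 : (0:ℝ) ≤ (v^2/2 + ((n:ℝ)-2)*v - v/2 - ((n:ℝ)-2)/4)/r^2 :=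
        div_nonneg hnum (le_of_lt hr2)
      rw [hlν]
      linarith
    have hμM : μ M < lamb ν - η ν := by
      have h1 : 2*r^2*μ M < v^2 := lt_of_lt_of_le hvμ (by nlinarith)
      have h2 : μ M < v^2/(2*r^2) := by
        rw [lt_div_iff₀ (by positivity)]; linarith
      linarith
    -- find the jump index
    have hex : ∃ m, lamb ν + ξ ν < μ m := by
      obtain ⟨K, hK⟩ := (htend.eventually_gt_atTop (lamb ν + ξ ν)).exists
      exact ⟨K, hK⟩
    set m := Nat.find hex with hm
    have hmspec : lamb ν + ξ ν < μ m := Nat.find_spec hex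
    have hm0 : m ≠ 0 := by
      intro h
      have : μ 0 ≤ μ j₀ := hmono (Nat.zero_le _)
      rw [h] at hmspec; linarith
    set j := m - 1 with hj
    have hjm : j + 1 = m := Nat.succ_pred_eq_of_pos (Nat.pos_of_ne_zero hm0)
    have hμjle : μ j ≤ lamb ν + ξ ν := by
      have := Nat.find_min hex (show j < m by omega)
      linarith [not_lt.mp this]
    have hj₀j : j₀ ≤ j := by
      by_contra h
      have : m ≤ j₀ := by omega
      have := hmono this
      linarith
    have hμjlow : lamb ν - η ν ≤ μ j := le_trans hj₀l (hmono hj₀j)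
    have hMj : M ≤ j := by
      by_contra h
      have : μ j ≤ μ M := hmono (by omega)
      linarith
    have hμj1 : lamb (ν+1) - η (ν+1) ≤ μ (j+1) := by
      by_contra h
      push_neg at h
      exact hres ν hν0 (j+1) ⟨by rw [hjm]; exact hmspec, h⟩
    have hμjpos : 0 < μ j := by
      have : (0:ℝ) < v^2/(2*r^2) := by positivity
      linarith
    refine ⟨j, hMj, ?_⟩
    have hnum : v/r^2 ≤ μ (j+1) - μ j := by linarith
    have hden : Real.sqrt (μ j) ≤ 3*v/(2*r) := by
      apply sqrt_le
      · positivity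
      · have : (3*v/(2*r))^2 = 9*v^2/(4*r^2) := by
          rw [div_pow]; ring_nf
        rw [this]; linarith
    have hdenpos : 0 < Real.sqrt (μ j) := Real.sqrt_pos.mpr hμjpos
    have hdiv : (v/r^2) / (3*v/(2*r)) ≤ (μ (j+1) - μ j) / Real.sqrt (μ j) :=
      div_le_div₀ (le_trans (div_nonneg (by linarith) (le_of_lt hr2)) hnum) hnum hdenpos hden
    have heq : (v/r^2) / (3*v/(2*r)) = 2/(3*r) := by
      have hvne : v ≠ 0 := by linarith
      have hrne : r ≠ 0 := ne_of_gt hr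
      field_simp
    rw [heq] at hdiv
    exact hdiv
  have hfreq : ∃ᶠ j in atTop, ((2/(3*r):ℝ):EReal) ≤
      (((μ (j + 1) - μ j) / Real.sqrt (μ j) : ℝ) : EReal) := by
    rw [frequently_atTop]
    intro a
    obtain ⟨j, hj, h⟩ := key a
    exact ⟨j, hj, EReal.coe_le_coe_iff.mpr h⟩
  have h1 := le_limsup_of_frequently_le' hfreq
  refine ⟨h1, lt_of_lt_of_le ?_ h1⟩
  exact_mod_cast EReal.coe_pos.mpr (by positivity)
end
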